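/- Let (X, r) be a finite left nondegenerate idempotent set-theoretic solution of the Yang–Baxter equation with |X| = n, let x₁,…,x_n be an enumeration of X, and let A = A(k,X,r) be its Yang–Baxter algebra over a field k. Then the n elements [x₁ x₁], [x₁ x₂], …, [x₁ x_n] (images in A of the length-2 words x₁ x_j) are linearly independent over k; consequently the image in A of the span of the length-2 words has dimension at least n (i.e. dim A₂ ≥ n). -/

import Mathlib

noncomputable section

open FreeAlgebra

/-- The defining relations of the Yang–Baxter algebra `A(k, X, r)` of a quadratic set
`(X, r)` with `X = Fin n`. -/
def qaRel (k : Type*) [Field k] (n : ℕ) (r : Fin n × Fin n → Fin n × Fin n) :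
    FreeAlgebra k (Fin n) → FreeAlgebra k (Fin n) → Prop :=
  fun a b => ∃ x y : Fin n,
    a = ι k x * ι k y ∧ b = ι k (r (x, y)).1 * ι k (r (x, y)).2

/-- `r¹² = r × id` on `X × X × X`. -/
def r12 {X : Type*} (r : X × X → X × X) : X × X × X → X × X × X :=
  fun t => ((r (t.1, t.2.1)).1, (r (t.1, t.2.1)).2, t.2.2)

/-- `r²³ = id × r` on `X × X × X`. -/
def r23 {X : Type*} (r : X × X → X × X) : X × X × X → X × X × X :=
  fun t => (t.1, r (t.2.1, t.2.2))

namespace Stmt6Aux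

/-- The setoid identifying two pairs when they have the same image under `r`. -/
def pairSetoid {n : ℕ} (r : Fin n × Fin n → Fin n × Fin n) : Setoid (Fin n × Fin n) where
  r p q := r p = r q
  iseqv := ⟨fun _ => rfl, Eq.symm, Eq.trans⟩

/-- A monoid truncating the free monoid on `Fin n` at degree 2, with degree-2 part
the classes of `pairSetoid r`. -/
inductive M (n : ℕ) (r : Fin n × Fin n → Fin n × Fin n) : Type
  | one : M n r
  | gen : Fin n → M n r
  | quad : Quotient (pairSetoid r) → M n r
  | zero : M n r

def M.mul {n : ℕ} {r : Fin n × Fin n → Fin n × Fin n} : M n r → M n r → M n r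
  | .one, a => a
  | .gen x, .one => .gen x
  | .quad q, .one => .quad q
  | .zero, .one => .zero
  | .gen x, .gen y => .quad ⟦(x, y)⟧
  | _, _ => .zero

instance {n : ℕ} {r : Fin n × Fin n → Fin n × Fin n} : Monoid (M n r) where
  mul := M.mul
  one := .one
  one_mul a := by cases a <;> rfl
  mul_one a := by cases a <;> rfl
  mul_assoc a b c := by cases a <;> cases b <;> cases c <;> rfl

theorem M.gen_mul_gen {n : ℕ} {r : Fin n × Fin n → Fin n × Fin n} (x y : Fin n) :
    (M.gen x : M n r) * M.gen y = M.quad ⟦(x, y)⟧ := rfl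

end Stmt6Aux

open Stmt6Aux

/-- for a finite left nondegenerate idempotent set-theoretic solution
`(X, r)` with `X = {x₁,…,xₙ}`, the images `[x₁ x_j]`, `1 ≤ j ≤ n`, are linearly
independent in `A(k,X,r)`; consequently the image of the span of the length-2 words
has dimension at least `n`. -/
theorem stmt_6 (k : Type*) [Field k] (n : ℕ) [NeZero n]
    (r : Fin n × Fin n → Fin n × Fin n)
    (hld : ∀ x : Fin n, Function.Bijective fun y : Fin n => (r (x, y)).1)
    (hidem : r ∘ r = r)
    (hbraid : r12 r ∘ r23 r ∘ r12 r = r23 r ∘ r12 r ∘ r23 r) :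
    LinearIndependent k
      (fun j : Fin n => RingQuot.mkAlgHom k (qaRel k n r) (ι k 0 * ι k j)) ∧
    (n : Cardinal) ≤
      Module.rank k
        ↥(Submodule.span k
          {a : RingQuot (qaRel k n r) |
            ∃ y z : Fin n, a = RingQuot.mkAlgHom k (qaRel k n r) (ι k y * ι k z)}) := by
  -- the algebra hom from the free algebra to the monoid algebra
  set T := MonoidAlgebra k (M n r) with hT
  let φ : FreeAlgebra k (Fin n) →ₐ[k] T :=
    FreeAlgebra.lift k (fun x => MonoidAlgebra.of k (M n r) (M.gen x))
  have hrel : ∀ ⦃a b⦄, qaRel k n r a b → φ a = φ b := by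
    rintro a b ⟨x, y, rfl, rfl⟩
    have h1 : r (r (x, y)) = r (x, y) := congrFun hidem (x, y)
    have hclass : (⟦(x, y)⟧ : Quotient (pairSetoid r)) = ⟦((r (x,y)).1, (r (x,y)).2)⟧ :=
      Quotient.sound (by show r (x, y) = r ((r (x,y)).1, (r (x,y)).2); rw [Prod.mk.eta, h1])
    simp only [map_mul, φ, FreeAlgebra.lift_ι_apply]
    rw [← map_mul, ← map_mul, M.gen_mul_gen, M.gen_mul_gen, hclass]
  let ψ : RingQuot (qaRel k n r) →ₐ[k] T := RingQuot.liftAlgHom k ⟨φ, hrel⟩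
  have hψ : ∀ x y : Fin n,
      ψ (RingQuot.mkAlgHom k (qaRel k n r) (ι k x * ι k y)) =
        MonoidAlgebra.of k (M n r) (M.quad ⟦(x, y)⟧) := by
    intro x y
    rw [show ψ (RingQuot.mkAlgHom k (qaRel k n r) (ι k x * ι k y)) = φ (ι k x * ι k y) from
      RingQuot.liftAlgHom_mkAlgHom_apply k _ _ _]
    simp only [map_mul, φ, FreeAlgebra.lift_ι_apply]
    rw [← map_mul, M.gen_mul_gen]
  -- injectivity of the class map
  have hginj : Function.Injective (fun j : Fin n => M.quad (⟦(0, j)⟧ : Quotient (pairSetoid r))) := by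
    intro i j hij
    have : (⟦((0 : Fin n), i)⟧ : Quotient (pairSetoid r)) = ⟦(0, j)⟧ := by
      injection hij
    have h2 : r (0, i) = r (0, j) := Quotient.exact this
    exact (hld 0).1 (by simpa using congrArg Prod.fst h2)
  -- linear independence in the monoid algebra
  have hsingle : LinearIndependent k
      (fun j : Fin n => MonoidAlgebra.of k (M n r) (M.quad ⟦(0, j)⟧)) := by
    have := (MonoidAlgebra.basis (M n r) k).linearIndependent.comp
      (fun j : Fin n => M.quad (⟦(0, j)⟧ : Quotient (pairSetoid r))) hginj
    simpa [MonoidAlgebra.of_apply, Function.comp_def] using this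
  have hLI : LinearIndependent k
      (fun j : Fin n => RingQuot.mkAlgHom k (qaRel k n r) (ι k 0 * ι k j)) := by
    apply LinearIndependent.of_comp ψ.toLinearMap
    have : (ψ.toLinearMap ∘ fun j : Fin n =>
        RingQuot.mkAlgHom k (qaRel k n r) (ι k 0 * ι k j)) =
        fun j : Fin n => MonoidAlgebra.of k (M n r) (M.quad ⟦(0, j)⟧) := by
      funext j; exact hψ 0 j
    rw [this]; exact hsingle
  refine ⟨hLI, ?_⟩
  set S := Submodule.span k
      {a : RingQuot (qaRel k n r) |
        ∃ y z : Fin n, a = RingQuot.mkAlgHom k (qaRel k n r) (ι k y * ι k z)} with hS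
  let f : Fin n → S := fun j =>
    ⟨RingQuot.mkAlgHom k (qaRel k n r) (ι k 0 * ι k j),
      Submodule.subset_span ⟨0, j, rfl⟩⟩
  have hfLI : LinearIndependent k f := by
    apply LinearIndependent.of_comp S.subtype
    exact hLI
  have := hfLI.cardinal_lift_le_rank
  simpa using this
end
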